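/- For p ∈ (1,∞), μ ≥ 0, and any n×n real matrices A, B, there exists a constant C = C(n,p) > 0 independent of μ such that ((μ + |A|²)^((p-2)/2) A − (μ + |B|²)^((p-2)/2) B) : (A − B) ≥ C (μ + |A|² + |B|²)^((p-2)/2) |A − B|², where : denotes the Frobenius inner product of matrices and |·| the Frobenius norm. -/

import Mathlib

open scoped BigOperators

/-- Squared Frobenius norm of a matrix. -/
noncomputable def frobSq {n : ℕ} (A : Matrix (Fin n) (Fin n) ℝ) : ℝ :=
  ∑ i, ∑ j, (A i j) ^ 2

/-- Frobenius inner product of two matrices. -/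
noncomputable def frobInner {n : ℕ} (A B : Matrix (Fin n) (Fin n) ℝ) : ℝ :=
  ∑ i, ∑ j, A i j * B i j

-- scalar calculus lemma
lemma scalar_key (q : ℝ) (hq1 : 0 < 1 + 2*q) (hq2 : q < 0) (μ : ℝ) (hμ : 0 ≤ μ)
    (ρ r : ℝ) (hρ : 0 ≤ ρ) (hρr : ρ ≤ r) (hpos : 0 < μ + ρ^2) :
    (1 + 2*q) * ((μ + r^2)^q) * (r - ρ) ≤ r * (μ + r^2)^q - ρ * (μ + ρ^2)^q := by
  set K : ℝ := (1 + 2*q) * (μ + r^2)^q with hK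
  set h : ℝ → ℝ := fun y => y * (μ + y^2)^q - K * y with hh
  have hbase : ∀ y ∈ Set.Icc ρ r, 0 < μ + y^2 := by
    intro y hy
    have : ρ^2 ≤ y^2 := by nlinarith [hy.1]
    linarith
  have hderiv : ∀ y ∈ Set.Icc ρ r,
      HasDerivAt h ((μ + y^2)^q + y * (2*y*q*(μ+y^2)^(q-1)) - K) y := by
    intro y hy
    have hb := hbase y hy
    have h1 : HasDerivAt (fun y : ℝ => μ + y^2) (2*y) y := by
      simpa using (hasDerivAt_pow 2 y).const_add μ
    have h2 : HasDerivAt (fun y : ℝ => (μ + y^2)^q) (2*y*q*(μ+y^2)^(q-1)) y := by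
      have := h1.rpow_const (p := q) (Or.inl (ne_of_gt hb))
      convert this using 1
    have h3 := (hasDerivAt_id y).mul h2
    have h4 := h3.sub ((hasDerivAt_id y).const_mul K)
    have e : h = ((id * fun y => (μ + y ^ 2) ^ q) - fun y => K * id y) := by
      funext z; simp only [hh, Pi.mul_apply, Pi.sub_apply, id_eq]
    rw [e]
    exact h4.congr_deriv (by simp only [id_eq, one_mul, mul_one])
  have hderiv_nonneg : ∀ y ∈ Set.Icc ρ r,
      0 ≤ (μ + y^2)^q + y * (2*y*q*(μ+y^2)^(q-1)) - K := by
    intro y hy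
    have hb := hbase y hy
    have hbr : 0 < μ + r^2 := by nlinarith [hy.2, hbase y hy, hy.1, hρ]
    have e1 : (μ + y^2)^q = (μ + y^2)^(q-1) * (μ + y^2) := by
      nth_rewrite 1 [show q = (q-1)+1 by ring]
      rw [Real.rpow_add_one (ne_of_gt hb)]
    have hpow : 0 < (μ + y^2)^(q-1) := Real.rpow_pos_of_pos hb _
    have e2 : (μ + y^2)^q + y * (2*y*q*(μ+y^2)^(q-1))
        = (μ + y^2)^(q-1) * (μ + (1+2*q)*y^2) := by
      rw [e1]; ring
    have e3 : (μ + y^2)^(q-1) * ((1+2*q) * (μ + y^2)) ≤ (μ + y^2)^(q-1) * (μ + (1+2*q)*y^2) := by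
      apply mul_le_mul_of_nonneg_left _ hpow.le
      nlinarith
    have e4 : (μ + y^2)^(q-1) * ((1+2*q) * (μ + y^2)) = (1+2*q) * (μ + y^2)^q := by
      rw [e1]; ring
    have e5 : (μ + r^2)^q ≤ (μ + y^2)^q := by
      apply Real.rpow_le_rpow_of_nonpos hb _ hq2.le
      nlinarith [hy.2, hy.1, hρ]
    have e6 : K ≤ (1+2*q) * (μ + y^2)^q := by
      rw [hK]; nlinarith
    rw [e2]; linarith [e3, e4 ▸ e3]
  have hmono : MonotoneOn h (Set.Icc ρ r) := by
    apply monotoneOn_of_deriv_nonneg (convex_Icc ρ r)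
    · intro y hy; exact (hderiv y hy).continuousAt.continuousWithinAt
    · intro y hy
      exact ((hderiv y (interior_subset hy)).differentiableAt).differentiableWithinAt
    · intro y hy
      rw [(hderiv y (interior_subset hy)).deriv]
      exact hderiv_nonneg y (interior_subset hy)
  have := hmono (Set.left_mem_Icc.mpr hρr) (Set.right_mem_Icc.mpr hρr) hρr
  simp only [hh] at this
  nlinarith [this]

lemma frobSq_nonneg {n : ℕ} (A : Matrix (Fin n) (Fin n) ℝ) : 0 ≤ frobSq A := by
  unfold frobSq
  exact Finset.sum_nonneg fun i _ => Finset.sum_nonneg fun j _ => sq_nonneg _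

lemma frobSq_sub {n : ℕ} (A B : Matrix (Fin n) (Fin n) ℝ) :
    frobSq (A - B) = frobSq A + frobSq B - 2 * frobInner A B := by
  unfold frobSq frobInner
  rw [Finset.mul_sum, ← Finset.sum_add_distrib, ← Finset.sum_sub_distrib]
  refine Finset.sum_congr rfl fun i _ => ?_
  rw [Finset.mul_sum, ← Finset.sum_add_distrib, ← Finset.sum_sub_distrib]
  refine Finset.sum_congr rfl fun j _ => ?_
  simp [Matrix.sub_apply]; ring

lemma frobInner_expand {n : ℕ} (x y : ℝ) (A B : Matrix (Fin n) (Fin n) ℝ) :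
    frobInner (x • A - y • B) (A - B)
      = x * frobSq A + y * frobSq B - (x + y) * frobInner A B := by
  unfold frobSq frobInner
  rw [Finset.mul_sum, Finset.mul_sum, Finset.mul_sum, ← Finset.sum_add_distrib,
    ← Finset.sum_sub_distrib]
  refine Finset.sum_congr rfl fun i _ => ?_
  rw [Finset.mul_sum, Finset.mul_sum, Finset.mul_sum, ← Finset.sum_add_distrib,
    ← Finset.sum_sub_distrib]
  refine Finset.sum_congr rfl fun j _ => ?_
  simp [Matrix.sub_apply, Matrix.smul_apply, smul_eq_mul]; ring

lemma frobInner_sq_le {n : ℕ} (A B : Matrix (Fin n) (Fin n) ℝ) :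
    (frobInner A B)^2 ≤ frobSq A * frobSq B := by
  have h := Finset.sum_mul_sq_le_sq_mul_sq (Finset.univ : Finset (Fin n × Fin n))
    (fun p => A p.1 p.2) (fun p => B p.1 p.2)
  simpa [frobInner, frobSq, Fintype.sum_prod_type] using h


lemma polyA (r ρ c : ℝ) (h : c ≤ r*ρ) : 0 ≤ r^2 + ρ^2 - 2*c := by
  nlinarith [sq_nonneg (r-ρ)]

lemma polyB (r ρ c : ℝ) (h : c ≤ r*ρ) : (r-ρ)^2 ≤ r^2 + ρ^2 - 2*c := by nlinarith

lemma polyC (s t M r ρ P : ℝ) (k1 : P*M*(r-ρ) ≤ P*s*(r-ρ))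
    (key : P*s*(r-ρ) ≤ r*s - ρ*t) (k3 : 0 ≤ r*s - ρ*t) :
    (t-s)*(r+ρ) ≤ (s+t-P*M)*(r-ρ) := by nlinarith

lemma polyD (s t M P : ℝ) (h1 : 0 ≤ (2-P)*M) (h2 : M ≤ s) (h3 : 0 ≤ t) :
    0 ≤ s+t-(P-1)*M := by nlinarith

lemma polyG (P S a : ℝ) (h : 0 ≤ S*a) (hP : P ≤ 2) :
    (P-1)/2 * S * (a+0-2*0) ≤ S*a + 0*0 - (S+0)*0 := by nlinarith

set_option maxHeartbeats 1000000 in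
lemma core_ge2 (p μ a b c d : ℝ) (hp2 : 2 ≤ p) (hμ : 0 ≤ μ) (ha : 0 ≤ a) (hb : 0 ≤ b)
    (hd : d = a + b - 2*c) (hd0 : 0 ≤ d) :
    1/(2*2^((p-2)/2)) * (μ+a+b)^((p-2)/2) * d ≤
      (μ+a)^((p-2)/2)*a + (μ+b)^((p-2)/2)*b - ((μ+a)^((p-2)/2)+(μ+b)^((p-2)/2))*c := by
  set q := (p-2)/2 with hqdef
  have hq : 0 ≤ q := by rw [hqdef]; linarith
  set s := (μ+a)^q with hs
  set t := (μ+b)^q with ht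
  set M := (μ+a+b)^q with hM
  have hs0 : 0 ≤ s := Real.rpow_nonneg (by linarith) _
  have ht0 : 0 ≤ t := Real.rpow_nonneg (by linarith) _
  have h2q : (0:ℝ) < 2^q := Real.rpow_pos_of_pos two_pos _
  have key1 : 0 ≤ (s - t)*(a - b) := by
    rcases le_total a b with h | h
    · have hst : s ≤ t := by
        rw [hs, ht]; exact Real.rpow_le_rpow (by linarith) (by linarith) hq
      have h1 : s - t ≤ 0 := by linarith
      have h2 : a - b ≤ 0 := by linarith
      nlinarith [mul_nonneg (neg_nonneg.mpr h1) (neg_nonneg.mpr h2)]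
    · have hst : t ≤ s := by
        rw [hs, ht]; exact Real.rpow_le_rpow (by linarith) (by linarith) hq
      exact mul_nonneg (by linarith) (by linarith)
  have key2 : M / 2^q ≤ s + t := by
    have hhalf : ((μ+a+b)/2)^q = M / 2^q := by
      rw [hM]; exact Real.div_rpow (by linarith) (by norm_num) q
    rcases le_total a b with h | h
    · have h1 : ((μ+a+b)/2)^q ≤ t := by
        rw [ht]; exact Real.rpow_le_rpow (by positivity) (by linarith) hq
      rw [hhalf] at h1; linarith
    · have h1 : ((μ+a+b)/2)^q ≤ s := by
        rw [hs]; exact Real.rpow_le_rpow (by positivity) (by linarith) hq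
      rw [hhalf] at h1; linarith
  clear_value s t M q
  have key3 : M / 2^q * d ≤ (s+t)*d := mul_le_mul_of_nonneg_right key2 hd0
  have e : 2*(s*a + t*b - (s+t)*c) = (s-t)*(a-b) + (s+t)*d := by rw [hd]; ring
  have hle : M / 2^q * d ≤ 2*(s*a + t*b - (s+t)*c) := by rw [e]; linarith
  have h2q' : (2:ℝ)^q ≠ 0 := ne_of_gt h2q
  have heq : 1/(2*2^q) * M * d = (M / 2^q * d)/2 := by
    field_simp
  rw [heq]
  linarith

set_option maxHeartbeats 1000000 in
lemma core_lt2 (p μ a b c d : ℝ) (hp : 1 < p) (hp2 : p < 2) (hμ : 0 ≤ μ) (ha : 0 ≤ a)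
    (hb : 0 ≤ b) (hba : b ≤ a) (hcs : c^2 ≤ a*b) (hd : d = a + b - 2*c) :
    (p-1)/2 * (μ+a+b)^((p-2)/2) * d ≤
      (μ+a)^((p-2)/2)*a + (μ+b)^((p-2)/2)*b - ((μ+a)^((p-2)/2)+(μ+b)^((p-2)/2))*c := by
  set q := (p-2)/2 with hqdef
  have hq2 : q < 0 := by rw [hqdef]; linarith
  have hq1 : 0 < 1 + 2*q := by rw [hqdef]; linarith
  have hp1 : 1 + 2*q = p - 1 := by rw [hqdef]; ring
  rcases eq_or_lt_of_le (by linarith : (0:ℝ) ≤ μ + b) with hb0 | hb0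
  · -- degenerate case μ + b = 0
    have hμ0 : μ = 0 := by linarith [hb0]
    have hbb : b = 0 := by linarith [hb0]
    have hc : c = 0 := by
      have h0 : c^2 ≤ 0 := by
        have := hcs
        rw [hbb, mul_zero] at this
        exact this
      have h1 : c^2 = 0 := le_antisymm h0 (sq_nonneg c)
      exact sq_eq_zero_iff.mp h1
    have ht : (μ+b)^q = 0 := by
      rw [hμ0, hbb, add_zero]
      exact Real.zero_rpow (ne_of_lt hq2)
    have hsa : 0 ≤ (μ+a)^q * a := mul_nonneg (Real.rpow_nonneg (by linarith) _) ha
    have hMeq : (μ+a+b)^q = (μ+a)^q := by rw [hbb, add_zero]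
    rw [ht, hMeq, hc, hd, hbb, hc]
    exact polyG p ((μ+a)^q) a hsa (by linarith)
  · have hapos : 0 < μ + a := by linarith
    set r := Real.sqrt a with hr
    set ρ := Real.sqrt b with hρ
    have hr2 : r^2 = a := Real.sq_sqrt ha
    have hρ2 : ρ^2 = b := Real.sq_sqrt hb
    have hr0 : 0 ≤ r := Real.sqrt_nonneg _
    have hρ0 : 0 ≤ ρ := Real.sqrt_nonneg _
    have hρr : ρ ≤ r := Real.sqrt_le_sqrt hba
    have hcrρ : c ≤ r * ρ := by
      have h1 : c ≤ |c| := le_abs_self c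
      have h2 : |c| = Real.sqrt (c^2) := (Real.sqrt_sq_eq_abs c).symm
      have h3 : Real.sqrt (c^2) ≤ Real.sqrt (a*b) := Real.sqrt_le_sqrt hcs
      have h4 : Real.sqrt (a*b) = r * ρ := Real.sqrt_mul ha b
      linarith
    have hd0 : 0 ≤ d := by
      rw [hd, ← hr2, ← hρ2]; exact polyA r ρ c hcrρ
    set u := Real.sqrt d with hu
    have hu2 : u^2 = d := Real.sq_sqrt hd0
    have hu0 : 0 ≤ u := Real.sqrt_nonneg _
    have hru : r - ρ ≤ u := by
      have h1 : (r-ρ)^2 ≤ d := by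
        rw [hd, ← hr2, ← hρ2]; exact polyB r ρ c hcrρ
      have h2 : Real.sqrt ((r-ρ)^2) ≤ u := Real.sqrt_le_sqrt h1
      rw [Real.sqrt_sq (by linarith)] at h2
      exact h2
    set s := (μ+a)^q with hs
    set t := (μ+b)^q with ht
    set M := (μ+a+b)^q with hM
    have hs0 : 0 < s := Real.rpow_pos_of_pos hapos _
    have ht0 : 0 < t := Real.rpow_pos_of_pos hb0 _
    have hM0 : 0 ≤ M := Real.rpow_nonneg (by linarith) _
    have hMs : M ≤ s := by
      rw [hM, hs]
      exact Real.rpow_le_rpow_of_nonpos hapos (by linarith) hq2.le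
    have hst : s ≤ t := by
      rw [hs, ht]
      exact Real.rpow_le_rpow_of_nonpos hb0 (by linarith) hq2.le
    have key : (1 + 2*q) * ((μ + r^2)^q) * (r - ρ) ≤ r * (μ + r^2)^q - ρ * (μ + ρ^2)^q :=
      scalar_key q hq1 hq2 μ hμ ρ r hρ0 hρr (by rw [hρ2]; exact hb0)
    rw [hr2, hρ2, ← hs, ← ht, hp1] at key
    clear_value r ρ u s t M q
    -- key : (p-1) * s * (r-ρ) ≤ r*s - ρ*t
    have hP0 : (0:ℝ) < p - 1 := by linarith
    have hrρ : 0 ≤ r - ρ := by linarith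
    have k1 : (p-1)*M*(r-ρ) ≤ (p-1)*s*(r-ρ) :=
      mul_le_mul_of_nonneg_right (mul_le_mul_of_nonneg_left hMs hP0.le) hrρ
    have k3 : 0 ≤ r*s - ρ*t :=
      le_trans (mul_nonneg (mul_nonneg hP0.le hs0.le) hrρ) key
    have step2 : (t-s)*(r+ρ) ≤ (s+t-(p-1)*M)*(r-ρ) := polyC s t M r ρ (p-1) k1 key k3
    have hcoef : 0 ≤ s+t-(p-1)*M :=
      polyD s t M p (mul_nonneg (by linarith) hM0) hMs ht0.le
    have hts0 : 0 ≤ (t-s)*(r+ρ) := mul_nonneg (by linarith) (by linarith)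
    have s3a : (t-s)*(r+ρ)*u ≤ (s+t-(p-1)*M)*(r-ρ)*u := mul_le_mul_of_nonneg_right step2 hu0
    have s3b : (s+t-(p-1)*M)*(r-ρ)*u ≤ (s+t-(p-1)*M)*u*u := by
      apply mul_le_mul_of_nonneg_right _ hu0
      exact mul_le_mul_of_nonneg_left hru hcoef
    have step3 : (t-s)*(r+ρ)*u ≤ (s+t-(p-1)*M)*u^2 := by linarith [s3a.trans s3b]
    have hab : a - b = (r+ρ)*(r-ρ) := by rw [← hr2, ← hρ2]; ring
    have step1 : (t-s)*(a-b) ≤ (t-s)*(r+ρ)*u := by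
      rw [hab, ← mul_assoc]
      exact mul_le_mul_of_nonneg_left hru hts0
    have f1 : (p-1)*M*u^2 ≤ (s-t)*(a-b) + (s+t)*u^2 := by linarith [step1.trans step3]
    have e' : 2*(s*a + t*b - (s+t)*c) = (s-t)*(a-b) + (s+t)*u^2 := by
      rw [hu2, hd]; ring
    rw [show d = u^2 from hu2.symm]
    linarith [f1, e']

/-- Monotonicity inequality for the p-Laplacean operator: for `p ∈ (1,∞)` there is a
constant `C = C(n,p) > 0`, independent of `μ ≥ 0`, such that for all matrices `A, B`,
`((μ+|A|²)^((p-2)/2) A − (μ+|B|²)^((p-2)/2) B) : (A−B) ≥ C (μ+|A|²+|B|²)^((p-2)/2) |A−B|²`. -/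
theorem stmt0 (n : ℕ) (p : ℝ) (hp : 1 < p) :
    ∃ C : ℝ, 0 < C ∧ ∀ μ : ℝ, 0 ≤ μ → ∀ A B : Matrix (Fin n) (Fin n) ℝ,
      C * (μ + frobSq A + frobSq B) ^ ((p - 2) / 2) * frobSq (A - B) ≤
        frobInner ((μ + frobSq A) ^ ((p - 2) / 2) • A - (μ + frobSq B) ^ ((p - 2) / 2) • B)
          (A - B) := by
  rcases le_or_gt 2 p with h2 | h2
  · refine ⟨1/(2*2^((p-2)/2)), by positivity, ?_⟩
    intro μ hμ A B
    have hd0 : 0 ≤ frobSq A + frobSq B - 2*frobInner A B := by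
      rw [← frobSq_sub]; exact frobSq_nonneg _
    rw [frobInner_expand, frobSq_sub]
    exact core_ge2 p μ _ _ _ _ h2 hμ (frobSq_nonneg A) (frobSq_nonneg B) rfl hd0
  · refine ⟨(p-1)/2, by linarith, ?_⟩
    intro μ hμ A B
    rw [frobInner_expand, frobSq_sub]
    rcases le_total (frobSq B) (frobSq A) with hba | hba
    · exact core_lt2 p μ _ _ _ _ hp h2 hμ (frobSq_nonneg A) (frobSq_nonneg B) hba
        (frobInner_sq_le A B) rfl
    · have h := core_lt2 p μ (frobSq B) (frobSq A) (frobInner A B)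
        (frobSq A + frobSq B - 2*frobInner A B) hp h2 hμ (frobSq_nonneg B) (frobSq_nonneg A)
        hba (by rw [mul_comm]; exact frobInner_sq_le A B) (by ring)
      have hMM : (μ + frobSq A + frobSq B)^((p-2)/2) = (μ + frobSq B + frobSq A)^((p-2)/2) := by
        ring_nf
      rw [hMM]
      linarith [h]
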